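/- Let (X,d) be a nonempty ultrametric space with at most 3 points. Then (X,d) belongs to the class UGVL, and every open ball of (X,d) is a centered sphere of (X,d). -/

import Mathlib

/-- `d` is an ultrametric on `X`: a nonnegative, symmetric function vanishing
exactly on the diagonal and satisfying the strong triangle inequality. -/
def IsUltrametricOn {X : Type*} (d : X → X → ℝ) : Prop :=
  (∀ x y, 0 ≤ d x y) ∧ (∀ x y, d x y = d y x) ∧
  (∀ x y, d x y = 0 ↔ x = y) ∧
  (∀ x y z, d x y ≤ max (d x z) (d z y))

/-- `B` is an open ball of the space `(X, d)`. -/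
def IsOpenBallOf {X : Type*} (d : X → X → ℝ) (B : Set X) : Prop :=
  ∃ c : X, ∃ r : ℝ, 0 < r ∧ B = {x | d c x < r}

/-- `C` is a centered sphere of the space `(X, d)`. -/
def IsCenteredSphereOf {X : Type*} (d : X → X → ℝ) (C : Set X) : Prop :=
  ∃ c ∈ C, ∃ r : ℝ, 0 ≤ r ∧ C = {x | d x c = r} ∪ {c}

/-- The diameter `sup {d x y : x, y ∈ A}` of a subset `A` of `(X, d)`. -/
noncomputable def setDiam {X : Type*} (d : X → X → ℝ) (A : Set X) : ℝ :=
  sSup {r | ∃ x ∈ A, ∃ y ∈ A, r = d x y}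

/-- A space is locally finite if all of its open balls are finite sets. -/
def IsLocallyFiniteOn {X : Type*} (d : X → X → ℝ) : Prop :=
  ∀ B : Set X, IsOpenBallOf d B → B.Finite

/-- The maximum of the (nonnegative) labels of the vertices of a walk `p`. -/
def walkMax {X : Type*} {T : SimpleGraph X} (l : X → ℝ) {u v : X} (p : T.Walk u v) : ℝ :=
  (p.support.map l).foldr max 0

/-- The function `d` is generated by the tree `T` with nonnegative vertex labeling `l`,
i.e. `d u u = 0` and, for `u ≠ v`, `d u v` is the maximum of the labels of the vertices
on the (unique) path joining `u` and `v` in `T`. -/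
def GeneratedBy {X : Type*} (d : X → X → ℝ) (T : SimpleGraph X) (l : X → ℝ) : Prop :=
  T.IsTree ∧ (∀ x, 0 ≤ l x) ∧ (∀ u, d u u = 0) ∧
  ∀ u v : X, u ≠ v → ∀ p : T.Walk u v, p.IsPath → d u v = walkMax l p

/-- `(X, d)` belongs to the class UGVL: it is generated by some labeled tree. -/
def IsUGVL {X : Type*} (d : X → X → ℝ) : Prop :=
  ∃ (T : SimpleGraph X) (l : X → ℝ), GeneratedBy d T l

section Aux

variable {X : Type*}

/-- If an open ball is contained in a two-element set, it is a centered sphere. -/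
lemma aux_pair_sphere (d : X → X → ℝ) (hd : IsUltrametricOn d) (c y : X) (r : ℝ) (hr : 0 < r)
    (hsub : ∀ x, d c x < r → x = c ∨ x = y) :
    IsCenteredSphereOf d {x | d c x < r} := by
  obtain ⟨hpos, hsymm, hzero, -⟩ := hd
  have hc : d c c < r := by rw [(hzero c c).mpr rfl]; exact hr
  by_cases hy : d c y < r ∧ y ≠ c
  · refine ⟨c, hc, d y c, hpos y c, ?_⟩
    ext x
    simp only [Set.mem_setOf_eq, Set.mem_union, Set.mem_singleton_iff]
    constructor
    · intro hx
      rcases hsub x hx with rfl | rfl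
      · right; rfl
      · left; rfl
    · rintro (hx | rfl)
      · show d c x < r
        rw [hsymm c x, hx, hsymm y c]
        exact hy.1
      · exact hc
  · refine ⟨c, hc, 0, le_rfl, ?_⟩
    ext x
    simp only [Set.mem_setOf_eq, Set.mem_union, Set.mem_singleton_iff]
    constructor
    · intro hx
      rcases hsub x hx with rfl | rfl
      · right; rfl
      · right
        by_contra hne
        exact hy ⟨hx, hne⟩
    · rintro (hx | rfl)
      · have : x = c := (hzero x c).mp hx
        subst this; exact hc
      · exact hc

/-- One-point case: UGVL. -/
lemma aux_one (d : X → X → ℝ) (hd : IsUltrametricOn d) (hsub : ∀ x y : X, x = y) (x₀ : X) :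
    IsUGVL d := by
  refine ⟨⊥, fun _ => 0, ⟨?_, SimpleGraph.isAcyclic_bot⟩,
    fun _ => le_rfl, fun u => (hd.2.2.1 u u).mpr rfl, ?_⟩
  · rw [SimpleGraph.connected_iff_exists_forall_reachable]
    refine ⟨x₀, fun w => ?_⟩
    rw [hsub w x₀]
  · intro u v huv
    exact absurd (hsub u v) huv

/-- Two-point case: UGVL. -/
lemma aux_two [Fintype X] (d : X → X → ℝ) (hd : IsUltrametricOn d)
    (a b : X) (hab : a ≠ b) (hcov : ∀ x : X, x = a ∨ x = b) (hc2 : Fintype.card X = 2) :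
    IsUGVL d := by
  classical
  obtain ⟨hpos, hsymm, hzero, hstr⟩ := hd
  refine ⟨{ Adj := fun u v => u ≠ v,
            symm := ⟨fun u v h => h.symm⟩,
            loopless := ⟨fun u h => h rfl⟩ },
          fun x => if x = a then 0 else d a b, ⟨?_, ?_⟩, ?_,
          fun u => (hzero u u).mpr rfl, ?_⟩
  · rw [SimpleGraph.connected_iff_exists_forall_reachable]
    refine ⟨a, fun w => ?_⟩
    by_cases h : a = w
    · subst h; exact SimpleGraph.Reachable.refl a
    · exact (SimpleGraph.Adj.reachable h)
  · intro v c hc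
    have h3 := hc.three_le_length
    have hle := hc.support_nodup.length_le_card
    rw [List.length_tail, SimpleGraph.Walk.length_support, hc2] at hle
    omega
  · intro x
    by_cases h : x = a <;> simp [h, hpos a b]
  · intro u v huv p hp
    cases p with
    | nil => exact absurd rfl huv
    | cons h₁ q =>
      cases q with
      | nil =>
        simp only [walkMax, SimpleGraph.Walk.support_cons, SimpleGraph.Walk.support_nil,
          List.map_cons, List.map_nil, List.foldr_cons, List.foldr_nil]
        rcases hcov u with hu | hu <;> rcases hcov v with hv | hv <;>
          first
            | exact absurd (hu.trans hv.symm) huv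
            | (rw [hu, hv]
               simp only [max_def, if_pos rfl, if_neg (Ne.symm hab)]
               split_ifs <;> linarith [hpos a b, hsymm a b])
      | cons h₂ q' =>
        exfalso
        have hle := hp.support_nodup.length_le_card
        simp only [SimpleGraph.Walk.support_cons, List.length_cons,
          SimpleGraph.Walk.length_support, hc2] at hle
        omega

/-- Three-point case: UGVL and balls are centered spheres. -/
lemma aux_three [Fintype X] (d : X → X → ℝ) (hd : IsUltrametricOn d)
    (a b e : X) (hab : a ≠ b) (hae : a ≠ e) (hbe : b ≠ e)
    (hcov : ∀ x : X, x = a ∨ x = b ∨ x = e) (hc3 : Fintype.card X = 3)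
    (h1 : d a b ≤ d a e) (h2 : d a b ≤ d b e) :
    IsUGVL d ∧ ∀ B : Set X, IsOpenBallOf d B → IsCenteredSphereOf d B := by
  classical
  obtain ⟨hpos, hsymm, hzero, hstr⟩ := id hd
  have heq : d a e = d b e :=
    le_antisymm ((hstr a e b).trans (max_le h2 le_rfl))
      ((hstr b e a).trans (max_le (by rw [hsymm b a]; exact h1) le_rfl))
  constructor
  · -- UGVL
    refine ⟨{ Adj := fun u v => u ≠ v ∧ (u = b ∨ v = b),
              symm := ⟨fun u v h => ⟨h.1.symm, h.2.symm⟩⟩,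
              loopless := ⟨fun u h => h.1 rfl⟩ },
            fun x => if x = a then 0 else if x = b then d a b else d a e,
            ⟨?_, ?_⟩, ?_, fun u => (hzero u u).mpr rfl, ?_⟩
    · -- connected
      rw [SimpleGraph.connected_iff_exists_forall_reachable]
      refine ⟨b, fun w => ?_⟩
      rcases hcov w with rfl | rfl | rfl
      · exact SimpleGraph.Adj.reachable ⟨hab.symm, Or.inl rfl⟩
      · exact SimpleGraph.Reachable.refl _
      · exact SimpleGraph.Adj.reachable ⟨hbe, Or.inl rfl⟩
    · -- acyclic
      intro v c hc
      have h3 := hc.three_le_length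
      have hnd := hc.support_nodup
      have hle := hnd.length_le_card
      rw [List.length_tail, SimpleGraph.Walk.length_support, hc3] at hle
      have hlen3 : c.length = 3 := by omega
      cases c with
      | nil => simp at hlen3
      | cons h₁ q =>
        rename_i x
        cases q with
        | nil => simp at hlen3
        | cons h₂ q' =>
          rename_i y
          cases q' with
          | nil => simp at hlen3
          | cons h₃ q'' =>
            rename_i z
            cases q'' with
            | cons h₄ q''' =>
              simp only [SimpleGraph.Walk.length_cons] at hlen3
              omega
            | nil =>
              -- walk v - x - y - v
              simp only [SimpleGraph.Walk.support_cons, SimpleGraph.Walk.support_nil,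
                List.tail_cons, List.nodup_cons, List.mem_cons, List.mem_singleton,
                List.not_mem_nil, or_false, List.nodup_nil, and_true,
                List.mem_singleton] at hnd
              push_neg at hnd
              obtain ⟨⟨hxy, hxv⟩, hyv, -⟩ := hnd
              rcases h₁.2 with hvb | hxb
              · rcases h₂.2 with hxb | hyb
                · exact hxv (hxb.trans hvb.symm)
                · exact hyv (hyb.trans hvb.symm)
              · rcases h₃.2 with hyb | hvb
                · exact hxy (hxb.trans hyb.symm)
                · exact hxv (hxb.trans hvb.symm)
    · -- labels nonneg
      intro x
      rcases hcov x with hx | hx | hx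
      · rw [hx]; simp
      · rw [hx]; simp [Ne.symm hab, hpos a b]
      · rw [hx]; simp [Ne.symm hae, Ne.symm hbe, hpos a e]
    · -- path values
      intro u v huv p hp
      have hnd := hp.support_nodup
      cases p with
      | nil => exact absurd rfl huv
      | cons h₁ q =>
        rename_i w
        cases q with
        | nil =>
          -- support [u, v]
          simp only [walkMax, SimpleGraph.Walk.support_cons, SimpleGraph.Walk.support_nil,
            List.map_cons, List.map_nil, List.foldr_cons, List.foldr_nil]
          rcases hcov u with hu | hu | hu <;> rcases hcov v with hv | hv | hv <;>
            first
              | exact absurd (hu.trans hv.symm) huv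
              | (exfalso
                 rcases h₁.2 with h | h <;>
                   first
                     | exact hab (hu.symm.trans h)
                     | exact hab (hv.symm.trans h)
                     | exact hbe (h.symm.trans hu)
                     | exact hbe (h.symm.trans hv))
              | (rw [hu, hv]
                 simp [Ne.symm hab, Ne.symm hae, Ne.symm hbe, max_def]
                 split_ifs <;>
                   linarith [hpos a b, hpos a e, h1, h2, heq, hsymm a b, hsymm a e, hsymm b e])
        | cons h₂ q' =>
          rename_i z
          cases q' with
          | nil =>
            -- support [u, w, v]  (h₁ : Adj u w, h₂ : Adj w v)
            simp only [walkMax, SimpleGraph.Walk.support_cons, SimpleGraph.Walk.support_nil,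
              List.map_cons, List.map_nil, List.foldr_cons, List.foldr_nil]
            simp only [SimpleGraph.Walk.support_cons, SimpleGraph.Walk.support_nil,
              List.nodup_cons, List.mem_cons, List.mem_singleton, List.not_mem_nil,
              or_false, List.nodup_nil, and_true] at hnd
            push_neg at hnd
            obtain ⟨⟨huw, huv'⟩, hwv⟩ := hnd
            have hwb : w = b := by
              rcases h₁.2 with hub | h
              · rcases h₂.2 with h | hvb
                · exact h
                · exact absurd (hub.trans hvb.symm) huv
              · exact h
            rcases hcov u with hu | hu | hu <;> rcases hcov v with hv | hv | hv <;>
              first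
                | exact absurd (hu.trans hv.symm) huv
                | exact absurd (hu.trans hwb.symm) huw
                | exact absurd (hwb.trans hv.symm) hwv
                | (rw [hu, hv, hwb]
                   simp [Ne.symm hab, Ne.symm hae, Ne.symm hbe, max_def]
                   split_ifs <;>
                     linarith [hpos a b, hpos a e, h1, h2, heq, hsymm a b, hsymm a e, hsymm b e])
          | cons h₃ q'' =>
            exfalso
            have hle := hnd.length_le_card
            simp only [SimpleGraph.Walk.support_cons, List.length_cons,
              SimpleGraph.Walk.length_support, hc3] at hle
            omega
  · -- balls are centered spheres
    intro B hB
    obtain ⟨c, r, hr, rfl⟩ := hB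
    by_cases hu : ∀ x, d c x < r
    · refine ⟨e, hu e, d a e, hpos a e, ?_⟩
      ext x
      simp only [Set.mem_setOf_eq, Set.mem_union, Set.mem_singleton_iff]
      constructor
      · intro _
        rcases hcov x with rfl | rfl | rfl
        · exact Or.inl rfl
        · exact Or.inl heq.symm
        · exact Or.inr rfl
      · intro _
        exact hu x
    · push_neg at hu
      obtain ⟨m, hm⟩ := hu
      have hm' : ¬ d c m < r := not_lt.mpr hm
      have hcB : d c c < r := by rw [(hzero c c).mpr rfl]; exact hr
      have hcm : c ≠ m := fun h => hm' (h ▸ hcB)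
      obtain ⟨y, hy⟩ : ∃ y, ∀ x, x ≠ m → x = c ∨ x = y := by
        rcases hcov c with h | h | h <;> rcases hcov m with h' | h' | h' <;>
          first
            | exact absurd (h.trans h'.symm) hcm
            | (refine ⟨a, fun x hx => ?_⟩
               rcases hcov x with h2 | h2 | h2 <;>
                 first
                   | exact Or.inl (h2.trans h.symm)
                   | exact Or.inr h2
                   | exact absurd (h2.trans h'.symm) hx)
            | (refine ⟨b, fun x hx => ?_⟩
               rcases hcov x with h2 | h2 | h2 <;>
                 first
                   | exact Or.inl (h2.trans h.symm)
                   | exact Or.inr h2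
                   | exact absurd (h2.trans h'.symm) hx)
            | (refine ⟨e, fun x hx => ?_⟩
               rcases hcov x with h2 | h2 | h2 <;>
                 first
                   | exact Or.inl (h2.trans h.symm)
                   | exact Or.inr h2
                   | exact absurd (h2.trans h'.symm) hx)
      exact aux_pair_sphere d hd c y r hr
        (fun x hx => hy x (fun hxm => hm' (hxm ▸ hx)))

end Aux

/-- Every nonempty ultrametric space with at most 3 points belongs to UGVL, and each
of its open balls is a centered sphere. -/
theorem stmt_10 {X : Type*} [Finite X] (hne : Nonempty X) (hcard : Nat.card X ≤ 3)
    (d : X → X → ℝ) (hd : IsUltrametricOn d) :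
    IsUGVL d ∧ ∀ B : Set X, IsOpenBallOf d B → IsCenteredSphereOf d B := by
  classical
  have : Fintype X := Fintype.ofFinite X
  obtain ⟨hpos, hsymm, hzero, hstr⟩ := id hd
  have hc1 : 1 ≤ Nat.card X := Nat.card_pos
  have hcc : Nat.card X = 1 ∨ Nat.card X = 2 ∨ Nat.card X = 3 := by omega
  rcases hcc with h | h | h
  · -- one point
    obtain ⟨hsub, -⟩ := Nat.card_eq_one_iff_unique.mp h
    have hsub' : ∀ x y : X, x = y := fun x y => Subsingleton.elim x y
    obtain ⟨x₀⟩ := hne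
    refine ⟨aux_one d hd hsub' x₀, ?_⟩
    intro B hB
    obtain ⟨c, r, hr, rfl⟩ := hB
    exact aux_pair_sphere d hd c c r hr (fun x _ => Or.inl (hsub' x c))
  · -- two points
    obtain ⟨a, b, hab, huniv⟩ := Nat.card_eq_two_iff.mp h
    have hcov : ∀ x : X, x = a ∨ x = b := by
      intro x
      have : x ∈ ({a, b} : Set X) := huniv.symm ▸ Set.mem_univ x
      simpa using this
    have hc2 : Fintype.card X = 2 := by rw [← Nat.card_eq_fintype_card]; exact h
    refine ⟨aux_two d hd a b hab hcov hc2, ?_⟩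
    intro B hB
    obtain ⟨c, r, hr, rfl⟩ := hB
    refine aux_pair_sphere d hd c (if c = a then b else a) r hr ?_
    intro x _
    rcases hcov x with rfl | rfl <;> rcases hcov c with rfl | rfl <;>
      simp [hab, hab.symm]
  · -- three points
    have hc3 : Fintype.card X = 3 := by rw [← Nat.card_eq_fintype_card]; exact h
    have hcu : (Finset.univ : Finset X).card = 3 := by rw [Finset.card_univ]; exact hc3
    obtain ⟨x, y, z, hxy, hxz, hyz, huniv⟩ := Finset.card_eq_three.mp hcu
    have hcov : ∀ t : X, t = x ∨ t = y ∨ t = z := by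
      intro t
      have : t ∈ ({x, y, z} : Finset X) := huniv ▸ Finset.mem_univ t
      simpa using this
    rcases le_total (d x y) (d x z) with h12 | h12 <;>
      rcases le_total (d x y) (d y z) with h13 | h13 <;>
        rcases le_total (d x z) (d y z) with h23 | h23 <;>
          first
            | exact aux_three d hd x y z hxy hxz hyz hcov hc3
                (by linarith) (by linarith)
            | exact aux_three d hd x z y hxz hxy hyz.symm
                (fun t => by rcases hcov t with h' | h' | h' <;> tauto) hc3
                (by linarith) (by linarith [hsymm y z])
            | exact aux_three d hd y z x hyz hxy.symm hxz.symm
                (fun t => by rcases hcov t with h' | h' | h' <;> tauto) hc3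
                (by linarith [hsymm x y]) (by linarith [hsymm x z])
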